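/- arXiv:2203.02494 — 4 statements merged into one kernel-verified Lean document; each statement's English description precedes it below -/
import Mathlib

section
/- If Y is a retract of X, then TC_{n,X}(Y^n) ≥ TC_n(Y). -/
def CoverHomotopic {A B : Type*} [TopologicalSpace A] [TopologicalSpace B]
    {ι : Type*} (f : ι → C(A, B)) (r : ℕ) : Prop :=
  ∃ U : Fin r → Set A, (∀ i, IsOpen (U i)) ∧ (⋃ i, U i) = Set.univ ∧
    ∀ i, ∀ j k : ι, ((f j).restrict (U i)).Homotopic ((f k).restrict (U i))

noncomputable def hD {A B : Type*} [TopologicalSpace A] [TopologicalSpace B]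
    {ι : Type*} (f : ι → C(A, B)) : ℕ∞ :=
  sInf {n : ℕ∞ | ∃ m : ℕ, 0 < m ∧ n = m ∧ CoverHomotopic f m}

/-- The projection `X^n → X` onto the `i`-th factor. -/
def proj (X : Type*) [TopologicalSpace X] (n : ℕ) (i : Fin n) : C(Fin n → X, X) :=
  ⟨fun x => x i, continuous_apply i⟩

/-- The projection `X^n → X` onto the `i`-th factor restricted to a subspace `Y ⊆ X^n`. -/
def restProj {X : Type*} [TopologicalSpace X] {n : ℕ} (Y : Set (Fin n → X)) (i : Fin n) :
    C(Y, X) :=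
  ⟨fun y => (y : Fin n → X) i, (continuous_apply i).comp continuous_subtype_val⟩

/-- The relative higher topological complexity `TC_{n,X}(Y)` for `Y ⊆ X^n`. -/
noncomputable def TCrel {X : Type*} [TopologicalSpace X] (n : ℕ) (Y : Set (Fin n → X)) : ℕ∞ :=
  hD (restProj Y)

/-- The higher topological complexity `TC_n(X)`. -/
noncomputable def TCn (X : Type*) [TopologicalSpace X] (n : ℕ) : ℕ∞ :=
  hD (proj X n)

theorem stmt3 {X : Type*} [TopologicalSpace X] [PathConnectedSpace X] (n : ℕ)
    (Y : Set X) (r : C(X, Y)) (hr : ∀ y : Y, r (y : X) = y) :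
    TCrel n {x : Fin n → X | ∀ i, x i ∈ Y} ≥ TCn Y n := by
  unfold TCrel TCn hD
  apply sInf_le_sInf
  rintro x ⟨m, hm, rfl, U, hUopen, hUcov, hH⟩
  refine ⟨m, hm, rfl, ?_⟩
  have hφc : Continuous (fun y : Fin n → Y =>
      (⟨fun i => (y i : X), fun i => (y i).2⟩ : {x : Fin n → X | ∀ i, x i ∈ Y})) := by
    apply Continuous.subtype_mk
    exact continuous_pi fun i => continuous_subtype_val.comp (continuous_apply i)
  let φ : C(Fin n → Y, {x : Fin n → X | ∀ i, x i ∈ Y}) := ⟨_, hφc⟩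
  refine ⟨fun i => φ ⁻¹' U i, fun i => (hUopen i).preimage φ.continuous, ?_, ?_⟩
  · ext y
    simp only [Set.mem_iUnion, Set.mem_preimage, Set.mem_univ, iff_true]
    have : φ y ∈ ⋃ i, U i := by rw [hUcov]; trivial
    simpa using this
  · intro i j k
    obtain ⟨H⟩ := hH i j k
    let ψ : C(φ ⁻¹' U i, U i) := ⟨fun v => ⟨φ v.1, v.2⟩, Continuous.subtype_mk
      (φ.continuous.comp continuous_subtype_val) _⟩
    have key : ∀ l : Fin n,
        (r.comp (((restProj {x : Fin n → X | ∀ i, x i ∈ Y} l).restrict (U i)).comp ψ))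
          = (proj Y n l).restrict (φ ⁻¹' U i) := by
      intro l
      ext v
      simp only [ContinuousMap.comp_apply, ContinuousMap.restrict_apply, restProj, proj,
        ψ, φ, ContinuousMap.coe_mk]
      exact congrArg Subtype.val (hr (v.1 l))
    have h1 : ((r.comp (((restProj {x : Fin n → X | ∀ i, x i ∈ Y} j).restrict (U i)).comp ψ))).Homotopic
        ((r.comp (((restProj {x : Fin n → X | ∀ i, x i ∈ Y} k).restrict (U i)).comp ψ))) :=
      ContinuousMap.Homotopic.comp (ContinuousMap.Homotopic.refl r) (ContinuousMap.Homotopic.comp ⟨H⟩ (ContinuousMap.Homotopic.refl ψ))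
    rw [key j, key k] at h1
    exact h1
end

section
/- If Y is a retract of X, then TC_n(Y) ≤ TC_n(X). -/
theorem stmt4 {X : Type*} [TopologicalSpace X] [PathConnectedSpace X] (n : ℕ)
    (Y : Set X) (r : C(X, Y)) (hr : ∀ y : Y, r (y : X) = y) :
    TCn Y n ≤ TCn X n := by
  apply sInf_le_sInf
  rintro N ⟨m, hm, rfl, U, hUopen, hUcov, hH⟩
  refine ⟨m, hm, rfl, ?_⟩
  -- inclusion map
  let ι : C(Fin n → Y, Fin n → X) :=
    ⟨fun x j => x j, by continuity⟩
  refine ⟨fun i => ι ⁻¹' U i, fun i => (hUopen i).preimage ι.continuous, ?_, ?_⟩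
  · ext x
    simp only [Set.mem_iUnion, Set.mem_preimage, Set.mem_univ, iff_true]
    have : ι x ∈ ⋃ i, U i := by rw [hUcov]; trivial
    simpa using this
  · intro i j k
    -- map from preimage into U i
    let e : C(↥(ι ⁻¹' U i), ↥(U i)) :=
      ⟨fun v => ⟨ι v, v.2⟩, Continuous.subtype_mk (ι.continuous.comp continuous_subtype_val) _⟩
    have key : ∀ l : Fin n,
        (proj (↥Y) n l).restrict (ι ⁻¹' U i)
          = (r.comp ((proj X n l).restrict (U i))).comp e := by
      intro l
      ext v
      exact congrArg Subtype.val (hr (v.1 l)).symm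
    have h := ContinuousMap.Homotopic.comp (ContinuousMap.Homotopic.refl r) (hH i j k)
    have h2 := ContinuousMap.Homotopic.comp h (ContinuousMap.Homotopic.refl e)
    rw [key j, key k]
    exact h2
end

section
/- For any subspace Y ⊆ X × X, the relative topological complexity satisfies TC_{2,X}(Y) ≤ cat_{X×X}(Y), the relative Lusternik–Schnirelmann category of Y in X × X. -/
/-- The inclusion of a subspace `Y ⊆ X × X`. -/
def incl {X : Type*} [TopologicalSpace X] (Y : Set (X × X)) : C(Y, X × X) :=
  ⟨fun y => (y : X × X), continuous_subtype_val⟩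

/-- `TC_{2,X}(Y) = D(p₁ ∘ i_Y, p₂ ∘ i_Y)`. -/
noncomputable def TC2rel {X : Type*} [TopologicalSpace X] (Y : Set (X × X)) : ℕ∞ :=
  hD ![(ContinuousMap.fst : C(X × X, X)).comp (incl Y), (ContinuousMap.snd : C(X × X, X)).comp (incl Y)]

/-- The relative LS-category `cat_{X×X}(Y) = D(i_Y, *)`. -/
noncomputable def catRel {X : Type*} [TopologicalSpace X] (Y : Set (X × X)) (c : X × X) : ℕ∞ :=
  hD ![incl Y, ContinuousMap.const Y c]

/-- Constant maps into a path-connected space are homotopic. -/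
lemma homotopic_const {A X : Type*} [TopologicalSpace A] [TopologicalSpace X]
    [PathConnectedSpace X] (a b : X) :
    (ContinuousMap.const A a).Homotopic (ContinuousMap.const A b) := by
  obtain ⟨γ⟩ : Nonempty (Path a b) := ⟨PathConnectedSpace.somePath a b⟩
  exact ⟨{ toFun := fun p => γ p.1
           continuous_toFun := γ.continuous.comp continuous_fst
           map_zero_left := fun _ => γ.source
           map_one_left := fun _ => γ.target }⟩

theorem stmt6 {X : Type*} [TopologicalSpace X] [PathConnectedSpace X]
    (Y : Set (X × X)) (c : X × X) :
    TC2rel Y ≤ catRel Y c := by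
  apply sInf_le_sInf
  rintro n ⟨m, hm, rfl, U, hopen, hcov, hhom⟩
  refine ⟨m, hm, rfl, U, hopen, hcov, fun i => ?_⟩
  have key : ∀ p : C(X × X, X),
      ((p.comp (incl Y)).restrict (U i)).Homotopic
        ((ContinuousMap.const (U i) (p c))) := by
    intro p
    have h01 := hhom i 0 1
    simp only [Matrix.cons_val_zero, Matrix.cons_val_one, Matrix.head_cons] at h01
    have := ContinuousMap.Homotopic.comp (ContinuousMap.Homotopic.refl p) h01
    exact this
  have h1 := key ContinuousMap.fst
  have h2 := key ContinuousMap.snd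
  have hc : (ContinuousMap.const (U i) ((ContinuousMap.fst : C(X × X, X)) c)).Homotopic
      (ContinuousMap.const (U i) ((ContinuousMap.snd : C(X × X, X)) c)) :=
    homotopic_const _ _
  have main : (((ContinuousMap.fst : C(X × X, X)).comp (incl Y)).restrict (U i)).Homotopic
      (((ContinuousMap.snd : C(X × X, X)).comp (incl Y)).restrict (U i)) :=
    (h1.trans hc).trans h2.symm
  intro j k
  fin_cases j <;> fin_cases k <;>
    simp only [Matrix.cons_val_zero, Matrix.cons_val_one, Matrix.head_cons, Fin.isValue] <;>
    first
      | exact ContinuousMap.Homotopic.refl _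
      | exact main
      | exact main.symm
end

section
/- If q_1 : E_1 → B and q_2 : E_2 → B are fiber homotopy equivalent fibrations (there exist fiberwise maps h : E_1 → E_2 and k : E_2 → E_1 with h∘k ≃ id and k∘h ≃ id over B), then TC_n[q_1 : E_1 → B] = TC_n[q_2 : E_2 → B]. -/
/-- Hurewicz fibration: the homotopy lifting property with respect to all spaces. -/
def IsHurewiczFibration {E B : Type*} [TopologicalSpace E] [TopologicalSpace B]
    (q : C(E, B)) : Prop :=
  ∀ (Z : Type) (_ : TopologicalSpace Z) (f : C(Z, E)) (H : C(Z × unitInterval, B)),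
    (∀ z, H (z, 0) = q (f z)) →
      ∃ G : C(Z × unitInterval, E), (∀ z, G (z, 0) = f z) ∧ ∀ p, q (G p) = H p

/-- The `n`-fold fiber product `E ×_B ⋯ ×_B E` as a subspace of `Eⁿ`. -/
def fiberProd {E B : Type*} [TopologicalSpace E] [TopologicalSpace B] (q : C(E, B))
    (n : ℕ) : Set (Fin n → E) :=
  {x | ∀ i j, q (x i) = q (x j)}

/-- The parametrised higher topological complexity
`TCₙ[q : E → B] = D(p₁^B, …, pₙ^B)`. -/
noncomputable def pTC {E B : Type*} [TopologicalSpace E] [TopologicalSpace B]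
    (q : C(E, B)) (n : ℕ) : ℕ∞ :=
  hD (restProj (fiberProd q n))

lemma cover_transfer {E₁ E₂ B : Type*} [TopologicalSpace E₁] [TopologicalSpace E₂]
    [TopologicalSpace B] (q₁ : C(E₁, B)) (q₂ : C(E₂, B))
    (h : C(E₁, E₂)) (k : C(E₂, E₁))
    (hfib₁ : ∀ e, q₂ (h e) = q₁ e)
    (hkh : (k.comp h).Homotopic (ContinuousMap.id E₁))
    (n m : ℕ) (hc : CoverHomotopic (restProj (fiberProd q₂ n)) m) :
    CoverHomotopic (restProj (fiberProd q₁ n)) m := by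
  obtain ⟨U, hUopen, hUcov, hU⟩ := hc
  have hmem : ∀ x : fiberProd q₁ n, (fun i => h (x.1 i)) ∈ fiberProd q₂ n := by
    intro x i j
    simp only [fiberProd, Set.mem_setOf_eq, hfib₁]
    exact x.2 i j
  let Hmap : C(fiberProd q₁ n, fiberProd q₂ n) :=
    ⟨fun x => ⟨fun i => h (x.1 i), hmem x⟩, by
      apply Continuous.subtype_mk
      exact continuous_pi fun i =>
        h.continuous.comp ((continuous_apply i).comp continuous_subtype_val)⟩
  refine ⟨fun i => Hmap ⁻¹' U i, fun i => (hUopen i).preimage Hmap.continuous, ?_, ?_⟩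
  · rw [← Set.preimage_iUnion, hUcov, Set.preimage_univ]
  · intro i j l
    let Hres : C(Hmap ⁻¹' U i, U i) :=
      ⟨fun y => ⟨Hmap y.1, y.2⟩,
        Continuous.subtype_mk (Hmap.continuous.comp continuous_subtype_val) _⟩
    have key : ∀ j : Fin n, ((restProj (fiberProd q₂ n) j).restrict (U i)).comp Hres
        = h.comp ((restProj (fiberProd q₁ n) j).restrict (Hmap ⁻¹' U i)) := fun _ => rfl
    have h1 : (h.comp ((restProj (fiberProd q₁ n) j).restrict (Hmap ⁻¹' U i))).Homotopic
        (h.comp ((restProj (fiberProd q₁ n) l).restrict (Hmap ⁻¹' U i))) := by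
      rw [← key, ← key]
      exact ContinuousMap.Homotopic.comp (hU i j l) (ContinuousMap.Homotopic.refl Hres)
    have h2 := ContinuousMap.Homotopic.comp (ContinuousMap.Homotopic.refl k) h1
    have h3 : ∀ j : Fin n, ((restProj (fiberProd q₁ n) j).restrict (Hmap ⁻¹' U i)).Homotopic
        (k.comp (h.comp ((restProj (fiberProd q₁ n) j).restrict (Hmap ⁻¹' U i)))) := by
      intro j
      have := ContinuousMap.Homotopic.comp hkh (ContinuousMap.Homotopic.refl
        ((restProj (fiberProd q₁ n) j).restrict (Hmap ⁻¹' U i)))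
      rw [ContinuousMap.comp_assoc, ContinuousMap.id_comp] at this
      exact this.symm
    exact ((h3 j).trans h2).trans (h3 l).symm

theorem stmt18 {E₁ E₂ B : Type*} [TopologicalSpace E₁] [TopologicalSpace E₂]
    [TopologicalSpace B] (q₁ : C(E₁, B)) (q₂ : C(E₂, B))
    (hq₁ : IsHurewiczFibration q₁) (hq₂ : IsHurewiczFibration q₂)
    (h : C(E₁, E₂)) (k : C(E₂, E₁))
    (hfib₁ : ∀ e, q₂ (h e) = q₁ e) (hfib₂ : ∀ e, q₁ (k e) = q₂ e)
    (hhk : ∃ H : (h.comp k).Homotopy (ContinuousMap.id E₂), ∀ t x, q₂ (H (t, x)) = q₂ x)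
    (hkh : ∃ K : (k.comp h).Homotopy (ContinuousMap.id E₁), ∀ t x, q₁ (K (t, x)) = q₁ x)
    (n : ℕ) :
    pTC q₁ n = pTC q₂ n := by
  unfold pTC hD
  congr 1
  ext N
  constructor <;> rintro ⟨m, hm, rfl, hc⟩ <;> refine ⟨m, hm, rfl, ?_⟩
  · exact cover_transfer q₂ q₁ k h hfib₂ ⟨hhk.choose⟩ n m hc
  · exact cover_transfer q₁ q₂ h k hfib₁ ⟨hkh.choose⟩ n m hc
end
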